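/- Thompson's group F admits no nontrivial decomposition as a direct product: if F ≅ A × B as an internal direct product of subgroups, then A or B is trivial. -/

import Mathlib

open scoped commutatorElement in
/-- The relators of the standard finite presentation of Thompson's group `F`:
`F = ⟨x₀, x₁ | [x₀x₁⁻¹, x₀⁻¹x₁x₀], [x₀x₁⁻¹, x₀⁻²x₁x₀²]⟩`,
with generators `x₀ = of false`, `x₁ = of true`. -/
def thompsonFRels : Set (FreeGroup Bool) :=
  { ⁅FreeGroup.of false * (FreeGroup.of true)⁻¹,
      (FreeGroup.of false)⁻¹ * FreeGroup.of true * FreeGroup.of false⁆,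
    ⁅FreeGroup.of false * (FreeGroup.of true)⁻¹,
      (FreeGroup.of false)⁻¹ * (FreeGroup.of false)⁻¹ * FreeGroup.of true *
        FreeGroup.of false * FreeGroup.of false⁆ }

/-- Thompson's group `F`. -/
def ThompsonF : Type := PresentedGroup thompsonFRels

instance : Group ThompsonF := by unfold ThompsonF; infer_instance

noncomputable section
namespace TFproof
open scoped commutatorElement

lemma perm_inv_apply_self (e : Equiv.Perm ℝ) (x : ℝ) : e⁻¹ (e x) = x := Equiv.symm_apply_apply e x
lemma perm_apply_inv_self (e : Equiv.Perm ℝ) (x : ℝ) : e (e⁻¹ x) = x := Equiv.apply_symm_apply e x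



/-- The PL map `x₁` of the real-line model of Thompson's group. -/
def f1fun : ℝ → ℝ := fun t => if t ≤ 0 then t else if t ≤ 2 then t / 2 else t - 1

def f1invfun : ℝ → ℝ := fun t => if t ≤ 0 then t else if t ≤ 1 then 2 * t else t + 1

lemma f1fun_left {t : ℝ} (h : t ≤ 0) : f1fun t = t := by simp [f1fun, h]
lemma f1fun_mid {t : ℝ} (h0 : 0 ≤ t) (h2 : t ≤ 2) : f1fun t = t / 2 := by
  rcases le_or_gt t 0 with h | h
  · have : t = 0 := le_antisymm h h0
    simp [f1fun, this]
  · simp [f1fun, not_le.2 h, h2]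
lemma f1fun_right {t : ℝ} (h : 2 ≤ t) : f1fun t = t - 1 := by
  rcases eq_or_lt_of_le h with rfl | h
  · norm_num [f1fun]
  · have h0 : ¬ t ≤ 0 := by linarith
    have h2 : ¬ t ≤ 2 := by linarith
    simp [f1fun, h0, h2]

lemma f1inv_left {t : ℝ} (h : t ≤ 0) : f1invfun t = t := by simp [f1invfun, h]
lemma f1inv_mid {t : ℝ} (h0 : 0 ≤ t) (h2 : t ≤ 1) : f1invfun t = 2 * t := by
  rcases le_or_gt t 0 with h | h
  · have : t = 0 := le_antisymm h h0
    simp [f1invfun, this]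
  · simp [f1invfun, not_le.2 h, h2]
lemma f1inv_right {t : ℝ} (h : 1 ≤ t) : f1invfun t = t + 1 := by
  rcases eq_or_lt_of_le h with rfl | h
  · norm_num [f1invfun]
  · have h0 : ¬ t ≤ 0 := by linarith
    have h2 : ¬ t ≤ 1 := by linarith
    simp [f1invfun, h0, h2]

lemma f1_left_inv : Function.LeftInverse f1invfun f1fun := by
  intro t
  rcases le_or_gt t 0 with h | h
  · rw [f1fun_left h, f1inv_left h]
  · rcases le_or_gt t 2 with h2 | h2
    · rw [f1fun_mid h.le h2, f1inv_mid (by linarith) (by linarith)]; ring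
    · rw [f1fun_right h2.le, f1inv_right (by linarith)]; ring

lemma f1_right_inv : Function.RightInverse f1invfun f1fun := by
  intro t
  rcases le_or_gt t 0 with h | h
  · rw [f1inv_left h, f1fun_left h]
  · rcases le_or_gt t 1 with h2 | h2
    · rw [f1inv_mid h.le h2, f1fun_mid (by linarith) (by linarith)]; ring
    · rw [f1inv_right h2.le, f1fun_right (by linarith)]; ring

/-- `x₁` as a permutation of `ℝ`. -/
def f1 : Equiv.Perm ℝ := ⟨f1fun, f1invfun, f1_left_inv, f1_right_inv⟩

/-- `x₀` as a permutation of `ℝ` : translation by `-1`. -/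
def f0 : Equiv.Perm ℝ := ⟨fun t => t - 1, fun t => t + 1, fun t => by ring, fun t => by ring⟩

@[simp] lemma f0_apply (t : ℝ) : f0 t = t - 1 := rfl
@[simp] lemma f0_inv_apply (t : ℝ) : f0⁻¹ t = t + 1 := rfl
lemma f1_apply (t : ℝ) : f1 t = f1fun t := rfl
lemma f1_inv_apply (t : ℝ) : f1⁻¹ t = f1invfun t := rfl

lemma f1fun_le (t : ℝ) : f1fun t ≤ t := by
  rcases le_or_gt t 0 with h | h
  · rw [f1fun_left h]
  · rcases le_or_gt t 2 with h2 | h2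
    · rw [f1fun_mid h.le h2]; linarith
    · rw [f1fun_right h2.le]; linarith

lemma f1fun_lt {t : ℝ} (h : 0 < t) : f1fun t < t := by
  rcases le_or_gt t 2 with h2 | h2
  · rw [f1fun_mid h.le h2]; linarith
  · rw [f1fun_right h2.le]; linarith

lemma f1fun_pos {t : ℝ} (h : 0 < t) : 0 < f1fun t := by
  rcases le_or_gt t 2 with h2 | h2
  · rw [f1fun_mid h.le h2]; linarith
  · rw [f1fun_right h2.le]; linarith

lemma f1_strictMono : StrictMono f1fun := by
  intro a b hab
  rcases le_or_gt a 0 with ha | ha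
  · rw [f1fun_left ha]
    rcases le_or_gt b 0 with hb | hb
    · rw [f1fun_left hb]; exact hab
    · exact lt_of_le_of_lt ha (f1fun_pos hb)
  · have h1 : 0 < f1fun a := f1fun_pos ha
    rcases le_or_gt a 2 with ha2 | ha2
    · rw [f1fun_mid ha.le ha2]
      rcases le_or_gt b 2 with hb2 | hb2
      · rw [f1fun_mid (by linarith) hb2]; linarith
      · rw [f1fun_right hb2.le]; linarith
    · rw [f1fun_right ha2.le]
      rw [f1fun_right (by linarith : (2:ℝ) ≤ b)]
      linarith

lemma f0_strictMono : StrictMono (f0 : ℝ → ℝ) := fun a b h => by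
  simpa [f0] using h

lemma f1_fix_iff (t : ℝ) : f1fun t = t ↔ t ≤ 0 := by
  constructor
  · intro h
    by_contra hc
    exact absurd h (ne_of_lt (f1fun_lt (not_le.1 hc)))
  · exact f1fun_left

/-- Two monotone permutations commute when one is supported on `(-∞, c]` and the
other on `[c, ∞)`. -/
lemma commute_of_split (u v : Equiv.Perm ℝ) (c : ℝ)
    (hu : ∀ t, c ≤ t → u t = t) (hv : ∀ t, t ≤ c → v t = t)
    (hum : Monotone u) (hvm : Monotone v) : Commute u v := by
  apply Equiv.ext
  intro t
  rcases le_or_gt t c with h | h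
  · have hvt : v t = t := hv t h
    have hut : u t ≤ c := by
      have := hum h
      rwa [hu c le_rfl] at this
    rw [Equiv.Perm.mul_apply, Equiv.Perm.mul_apply, hvt, hv _ hut]
  · have hut : u t = t := hu t h.le
    have hvt : c ≤ v t := by
      have := hvm h.le
      rwa [hv c le_rfl] at this
    rw [Equiv.Perm.mul_apply, Equiv.Perm.mul_apply, hut, hu _ hvt]

lemma u_fix {t : ℝ} (h : 1 ≤ t) : (f0 * f1⁻¹) t = t := by
  rw [Equiv.Perm.mul_apply, f1_inv_apply, f1inv_right h, f0_apply]; ring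

lemma v1_fix {t : ℝ} (h : t ≤ 1) : (f0⁻¹ * f1 * f0) t = t := by
  rw [Equiv.Perm.mul_apply, Equiv.Perm.mul_apply, f0_apply, f1_apply,
    f1fun_left (by linarith), f0_inv_apply]; ring

lemma v2_fix {t : ℝ} (h : t ≤ 1) : (f0⁻¹ * f0⁻¹ * f1 * f0 * f0) t = t := by
  rw [Equiv.Perm.mul_apply, Equiv.Perm.mul_apply, Equiv.Perm.mul_apply, Equiv.Perm.mul_apply,
    f0_apply, f0_apply, f1_apply, f1fun_left (by linarith), f0_inv_apply, f0_inv_apply]; ring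

lemma perm_inv_strictMono {u : Equiv.Perm ℝ} (h : StrictMono u) : StrictMono (u⁻¹ : Equiv.Perm ℝ) := by
  intro a b hab
  rcases lt_trichotomy ((u⁻¹ : Equiv.Perm ℝ) a) ((u⁻¹ : Equiv.Perm ℝ) b) with hl | he | hg
  · exact hl
  · exfalso
    have := congrArg u he
    simp at this
    exact absurd this (ne_of_lt hab)
  · exfalso
    have := h hg
    simp at this
    exact absurd hab (not_lt.2 this.le)

lemma mono_u : Monotone ((f0 * f1⁻¹ : Equiv.Perm ℝ) : ℝ → ℝ) := by
  have : StrictMono ((f0 * f1⁻¹ : Equiv.Perm ℝ) : ℝ → ℝ) := by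
    intro a b hab
    rw [Equiv.Perm.mul_apply, Equiv.Perm.mul_apply]
    exact f0_strictMono (perm_inv_strictMono (fun a b h => f1_strictMono h) hab)
  exact this.monotone



variable {G : Type*} [Group G]

lemma lift_rels {f : Bool → G}
    (h1 : Commute (f false * (f true)⁻¹) ((f false)⁻¹ * f true * f false))
    (h2 : Commute (f false * (f true)⁻¹)
      ((f false)⁻¹ * (f false)⁻¹ * f true * f false * f false)) :
    ∀ r ∈ thompsonFRels, FreeGroup.lift f r = 1 := by
  intro r hr
  rcases hr with rfl | rfl
  · rw [map_commutatorElement]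
    simp only [map_mul, map_inv, FreeGroup.lift_apply_of]
    exact h1.commutator_eq
  · rw [map_commutatorElement]
    simp only [map_mul, map_inv, FreeGroup.lift_apply_of]
    exact h2.commutator_eq

/-- The generators of `ThompsonF`. -/
def a0 : ThompsonF := PresentedGroup.of false
def a1 : ThompsonF := PresentedGroup.of true

lemma rel1 : Commute (a0 * a1⁻¹) (a0⁻¹ * a1 * a0) := by
  rw [← commutatorElement_eq_one_iff_commute]
  have : PresentedGroup.mk thompsonFRels
      ⁅FreeGroup.of false * (FreeGroup.of true)⁻¹,
        (FreeGroup.of false)⁻¹ * FreeGroup.of true * FreeGroup.of false⁆ = 1 := by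
    exact (QuotientGroup.eq_one_iff _).mpr (Subgroup.subset_normalClosure (Or.inl rfl))
  rw [map_commutatorElement] at this
  simp only [map_mul, map_inv] at this
  exact this

lemma rel2 : Commute (a0 * a1⁻¹) (a0⁻¹ * a0⁻¹ * a1 * a0 * a0) := by
  rw [← commutatorElement_eq_one_iff_commute]
  have : PresentedGroup.mk thompsonFRels
      ⁅FreeGroup.of false * (FreeGroup.of true)⁻¹,
        (FreeGroup.of false)⁻¹ * (FreeGroup.of false)⁻¹ * FreeGroup.of true *
          FreeGroup.of false * FreeGroup.of false⁆ = 1 := by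
    exact (QuotientGroup.eq_one_iff _).mpr (Subgroup.subset_normalClosure (Or.inr rfl))
  rw [map_commutatorElement] at this
  simp only [map_mul, map_inv] at this
  exact this

/-- Universal property tailored to `ThompsonF`. -/
def toGrp {f : Bool → G}
    (h : ∀ r ∈ thompsonFRels, FreeGroup.lift f r = 1) : ThompsonF →* G :=
  PresentedGroup.toGroup h

@[simp] lemma toGrp_a0 {f : Bool → G} (h : ∀ r ∈ thompsonFRels, FreeGroup.lift f r = 1) :
    toGrp h a0 = f false := PresentedGroup.toGroup.of h

@[simp] lemma toGrp_a1 {f : Bool → G} (h : ∀ r ∈ thompsonFRels, FreeGroup.lift f r = 1) :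
    toGrp h a1 = f true := PresentedGroup.toGroup.of h

/-- Induction over `ThompsonF` as a group generated by `a0`, `a1`. -/
lemma tf_induction (P : ThompsonF → Prop) (h1 : P 1) (h0 : P a0) (hx1 : P a1)
    (hinv : ∀ g, P g → P g⁻¹) (hmul : ∀ g h, P g → P h → P (g * h)) :
    ∀ g : ThompsonF, P g := by
  intro g
  have : ∀ z : FreeGroup Bool, P (PresentedGroup.mk thompsonFRels z) := by
    intro z
    induction z using FreeGroup.induction_on with
    | C1 => rw [map_one]; exact h1
    | of x =>
      cases x
      · exact h0
      · exact hx1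
    | inv_of x hx =>
      rw [map_inv]
      exact hinv _ hx
    | mul x y hx hy =>
      rw [map_mul]
      exact hmul _ _ hx hy
  exact PresentedGroup.induction_on g this

/-- The family `x_n` of generators: `x_{n+1} = x_0⁻¹ x_n x_0` for `n ≥ 1`. -/
def xg : ℕ → ThompsonF
  | 0 => a0
  | 1 => a1
  | (n+2) => a0⁻¹ * xg (n+1) * a0

lemma xg_succ (n : ℕ) (hn : 1 ≤ n) : xg (n+1) = a0⁻¹ * xg n * a0 := by
  match n, hn with
  | (m+1), _ => rfl

lemma R0 (n : ℕ) (hn : 1 ≤ n) : (xg 0)⁻¹ * xg n * xg 0 = xg (n+1) :=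
  (xg_succ n hn).symm

lemma S2 : (xg 1)⁻¹ * xg 2 * xg 1 = xg 3 := by
  have h := rel1
  -- rel1 : a0 * a1⁻¹ commutes with x2 := a0⁻¹ * a1 * a0
  have hx2 : xg 2 = a0⁻¹ * a1 * a0 := rfl
  have hx3 : xg 3 = a0⁻¹ * (a0⁻¹ * a1 * a0) * a0 := rfl
  have h' := h.eq
  -- (a0 a1⁻¹) x2 = x2 (a0 a1⁻¹)
  rw [hx2, hx3]
  -- goal: a1⁻¹ * (a0⁻¹ a1 a0) * a1 = a0⁻¹ (a0⁻¹ a1 a0) a0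
  have : a1⁻¹ * (a0⁻¹ * a1 * a0) * a1 = a0⁻¹ * (a0⁻¹ * a1 * a0) * a0 := by
    have e : a0 * a1⁻¹ * (a0⁻¹ * a1 * a0) = (a0⁻¹ * a1 * a0) * (a0 * a1⁻¹) := h'
    calc a1⁻¹ * (a0⁻¹ * a1 * a0) * a1 = a0⁻¹ * (a0 * a1⁻¹ * (a0⁻¹ * a1 * a0)) * a1 := by group
    _ = a0⁻¹ * ((a0⁻¹ * a1 * a0) * (a0 * a1⁻¹)) * a1 := by rw [e]
    _ = a0⁻¹ * (a0⁻¹ * a1 * a0) * a0 := by group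
  exact this

lemma S3 : (xg 1)⁻¹ * xg 3 * xg 1 = xg 4 := by
  have h := rel2
  have hx3 : xg 3 = a0⁻¹ * a0⁻¹ * a1 * a0 * a0 := by
    show a0⁻¹ * (a0⁻¹ * a1 * a0) * a0 = _
    group
  have hx4 : xg 4 = a0⁻¹ * (a0⁻¹ * a0⁻¹ * a1 * a0 * a0) * a0 := by
    show a0⁻¹ * (a0⁻¹ * (a0⁻¹ * a1 * a0) * a0) * a0 = _
    group
  have h' := h.eq
  rw [hx3, hx4]
  have : a1⁻¹ * (a0⁻¹ * a0⁻¹ * a1 * a0 * a0) * a1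
      = a0⁻¹ * (a0⁻¹ * a0⁻¹ * a1 * a0 * a0) * a0 := by
    have e : a0 * a1⁻¹ * (a0⁻¹ * a0⁻¹ * a1 * a0 * a0)
        = (a0⁻¹ * a0⁻¹ * a1 * a0 * a0) * (a0 * a1⁻¹) := h'
    calc a1⁻¹ * (a0⁻¹ * a0⁻¹ * a1 * a0 * a0) * a1
        = a0⁻¹ * (a0 * a1⁻¹ * (a0⁻¹ * a0⁻¹ * a1 * a0 * a0)) * a1 := by group
    _ = a0⁻¹ * ((a0⁻¹ * a0⁻¹ * a1 * a0 * a0) * (a0 * a1⁻¹)) * a1 := by rw [e]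
    _ = a0⁻¹ * (a0⁻¹ * a0⁻¹ * a1 * a0 * a0) * a0 := by group
  exact this

/-- Diagonal step: conjugating the relation by `a0`. -/
lemma Rdiag {k n : ℕ} (hk : 1 ≤ k) (hn : 1 ≤ n)
    (h : (xg k)⁻¹ * xg n * xg k = xg (n+1)) :
    (xg (k+1))⁻¹ * xg (n+1) * xg (k+1) = xg (n+2) := by
  rw [xg_succ k hk, xg_succ n hn, xg_succ (n+1) (by omega)]
  calc (a0⁻¹ * xg k * a0)⁻¹ * (a0⁻¹ * xg n * a0) * (a0⁻¹ * xg k * a0)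
      = a0⁻¹ * ((xg k)⁻¹ * xg n * xg k) * a0 := by group
  _ = a0⁻¹ * xg (n+1) * a0 := by rw [h]

/-- The `k = 1` relations, by strong induction. -/
lemma S1 : ∀ n, 2 ≤ n → (xg 1)⁻¹ * xg n * xg 1 = xg (n+1) := by
  intro n
  induction n using Nat.strong_induction_on with
  | _ n ih =>
  intro hn
  match n, hn with
  | 2, _ => exact S2
  | 3, _ => exact S3
  | (m+4), _ => ?_
  -- n = m+4 ≥ 4 ; use S1 (m+2), S1 (m+3)
  have hA : (xg 1)⁻¹ * xg (m+2) * xg 1 = xg (m+3) := ih (m+2) (by omega) (by omega)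
  have hB : (xg 1)⁻¹ * xg (m+3) * xg 1 = xg (m+4) := ih (m+3) (by omega) (by omega)
  -- R(2, m+3) from diag of S1 (m+2)
  have hR2 : (xg 2)⁻¹ * xg (m+3) * xg 2 = xg (m+4) := Rdiag (by omega) (by omega) hA
  -- R(3, m+4) from diag of R(2, m+3)
  have hR3 : (xg 3)⁻¹ * xg (m+4) * xg 3 = xg (m+5) := Rdiag (by omega) (by omega) hR2
  -- x_{m+4} = x2⁻¹ x_{m+3} x2
  have hx : xg (m+4) = (xg 2)⁻¹ * xg (m+3) * xg 2 := hR2.symm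
  -- x2 * x1 = x1 * x3
  have hswap : xg 2 * xg 1 = xg 1 * xg 3 := by
    have := hA  -- no, need S2
    have e := S2
    calc xg 2 * xg 1 = xg 1 * ((xg 1)⁻¹ * xg 2 * xg 1) := by group
    _ = xg 1 * xg 3 := by rw [e]
  have hswap' : (xg 1)⁻¹ * (xg 2)⁻¹ = (xg 3)⁻¹ * (xg 1)⁻¹ := by
    have := congrArg (fun z => z⁻¹) hswap
    simp only [mul_inv_rev] at this
    exact this
  calc (xg 1)⁻¹ * xg (m+4) * xg 1
      = ((xg 1)⁻¹ * (xg 2)⁻¹) * xg (m+3) * (xg 2 * xg 1) := by rw [hx]; group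
  _ = ((xg 3)⁻¹ * (xg 1)⁻¹) * xg (m+3) * (xg 1 * xg 3) := by rw [hswap', hswap]
  _ = (xg 3)⁻¹ * ((xg 1)⁻¹ * xg (m+3) * xg 1) * xg 3 := by group
  _ = (xg 3)⁻¹ * xg (m+4) * xg 3 := by rw [hB]
  _ = xg (m+5) := hR3

/-- The full family of relations of the infinite presentation. -/
lemma Rrel : ∀ k n, k < n → (xg k)⁻¹ * xg n * xg k = xg (n+1) := by
  intro k
  induction k with
  | zero => intro n hn; exact R0 n hn
  | succ k ih =>
    intro n hn
    match k, n, hn with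
    | 0, (n+1), hn => exact S1 (n+1) (by omega)
    | (k+1), (n+1), hn =>
      exact Rdiag (by omega) (by omega) (ih n (by omega))


section Rep

/-- Generator assignment for the real-line representation. -/
def fb : Bool → Equiv.Perm ℝ := fun b => match b with
  | false => f0
  | true => f1

lemma perm_mul_strictMono {u v : Equiv.Perm ℝ} (hu : StrictMono u) (hv : StrictMono v) :
    StrictMono ((u * v : Equiv.Perm ℝ) : ℝ → ℝ) := by
  intro x y h
  rw [Equiv.Perm.mul_apply, Equiv.Perm.mul_apply]
  exact hu (hv h)

lemma f1_SM : StrictMono (f1 : ℝ → ℝ) := fun x y h => f1_strictMono h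

lemma rels_hold : ∀ r ∈ thompsonFRels, FreeGroup.lift fb r = 1 := by
  apply lift_rels
  · show Commute (f0 * f1⁻¹) (f0⁻¹ * f1 * f0)
    apply commute_of_split _ _ 1
    · intro t ht; exact u_fix ht
    · intro t ht; exact v1_fix ht
    · exact (perm_mul_strictMono f0_strictMono (perm_inv_strictMono f1_SM)).monotone
    · exact (perm_mul_strictMono (perm_mul_strictMono
        (perm_inv_strictMono f0_strictMono) f1_SM) f0_strictMono).monotone
  · show Commute (f0 * f1⁻¹) (f0⁻¹ * f0⁻¹ * f1 * f0 * f0)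
    apply commute_of_split _ _ 1
    · intro t ht; exact u_fix ht
    · intro t ht; exact v2_fix ht
    · exact (perm_mul_strictMono f0_strictMono (perm_inv_strictMono f1_SM)).monotone
    · exact (perm_mul_strictMono (perm_mul_strictMono (perm_mul_strictMono
        (perm_mul_strictMono (perm_inv_strictMono f0_strictMono)
          (perm_inv_strictMono f0_strictMono)) f1_SM) f0_strictMono) f0_strictMono).monotone

/-- The representation of Thompson's group on the real line. -/
def ρ : ThompsonF →* Equiv.Perm ℝ := toGrp rels_hold

@[simp] lemma rho_a0 : ρ a0 = f0 := toGrp_a0 rels_hold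
@[simp] lemma rho_a1 : ρ a1 = f1 := toGrp_a1 rels_hold

lemma rho_strictMono (g : ThompsonF) : StrictMono (ρ g : ℝ → ℝ) := by
  induction g using tf_induction with
  | h1 => simp only [map_one]; intro x y h; simpa using h
  | h0 => rw [rho_a0]; exact f0_strictMono
  | hx1 => rw [rho_a1]; exact f1_SM
  | hinv g hg => rw [map_inv]; exact perm_inv_strictMono hg
  | hmul g h hg hh => rw [map_mul]; exact perm_mul_strictMono hg hh

/-- Evaluation of the generators `x_n`, `n ≥ 1`. -/
lemma xg_eval : ∀ (m : ℕ) (t : ℝ), ρ (xg (m+1)) t = f1fun (t - m) + m := by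
  intro m
  induction m with
  | zero => intro t; simp [xg, rho_a1, f1_apply]
  | succ m ih =>
    intro t
    have : xg (m+2) = a0⁻¹ * xg (m+1) * a0 := rfl
    rw [this, map_mul, map_mul, map_inv, Equiv.Perm.mul_apply, Equiv.Perm.mul_apply,
      rho_a0, f0_apply, ih, f0_inv_apply]
    push_cast
    ring_nf

lemma xg_fix {m : ℕ} {t : ℝ} (h : t ≤ m) : ρ (xg (m+1)) t = t := by
  rw [xg_eval, f1fun_left (by linarith)]
  ring

lemma xg_fix_iff {m : ℕ} {t : ℝ} : ρ (xg (m+1)) t = t ↔ t ≤ m := by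
  constructor
  · intro h
    by_contra hc
    push_neg at hc
    rw [xg_eval] at h
    have h2 : f1fun (t - m) < t - m := f1fun_lt (by linarith)
    linarith
  · exact xg_fix

lemma xg_right {m : ℕ} {t : ℝ} (h : (m:ℝ) + 2 ≤ t) : ρ (xg (m+1)) t = t - 1 := by
  rw [xg_eval, f1fun_right (by linarith)]
  ring

lemma xg0_eval (t : ℝ) : ρ (xg 0) t = t - 1 := by
  show ρ a0 t = t - 1
  rw [rho_a0, f0_apply]

lemma xg1_mid {t : ℝ} (h0 : 0 ≤ t) (h2 : t ≤ 2) : ρ (xg 1) t = t / 2 := by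
  have := xg_eval 0 t
  rw [this]
  push_cast
  rw [f1fun_mid (by linarith) (by linarith)]
  ring

end Rep

section Words

/-- The positive word with the given letters. -/
def wrd (l : List ℕ) : ThompsonF := (l.map xg).prod

@[simp] lemma wrd_nil : wrd [] = 1 := rfl
@[simp] lemma wrd_cons (a : ℕ) (l : List ℕ) : wrd (a :: l) = xg a * wrd l := by
  simp [wrd]

lemma wrd_append (l₁ l₂ : List ℕ) : wrd (l₁ ++ l₂) = wrd l₁ * wrd l₂ := by
  simp [wrd]

/-- Evaluation on `(-∞, 0]` counts occurrences of `x₀`. -/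
lemma W1 : ∀ (l : List ℕ) (t : ℝ), t ≤ 0 → ρ (wrd l) t = t - l.count 0 := by
  intro l
  induction l with
  | nil => intro t ht; simp
  | cons a l ih =>
    intro t ht
    rw [wrd_cons, map_mul, Equiv.Perm.mul_apply, ih t ht]
    have hc : (0:ℝ) ≤ l.count 0 := by positivity
    cases a with
    | zero =>
      rw [xg0_eval]
      have : ((0:ℕ) :: l).count 0 = l.count 0 + 1 := by simp [List.count_cons]
      rw [this]
      push_cast
      ring
    | succ m =>
      rw [xg_fix (by linarith)]
      have : ((m+1) :: l).count 0 = l.count 0 := by simp [List.count_cons]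
      rw [this]

/-- Evaluation on `(0, 1]` for words with letters `≥ 1`: counts occurrences of `x₁`. -/
lemma W2 : ∀ (l : List ℕ), (∀ a ∈ l, 1 ≤ a) → ∀ t : ℝ, 0 < t → t ≤ 1 →
    ρ (wrd l) t = t / 2 ^ (l.count 1) := by
  intro l
  induction l with
  | nil => intro _ t _ _; simp
  | cons a l ih =>
    intro hpos t h0 h1
    have hl : ∀ a ∈ l, 1 ≤ a := fun a ha => hpos a (List.mem_cons_of_mem _ ha)
    rw [wrd_cons, map_mul, Equiv.Perm.mul_apply, ih hl t h0 h1]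
    have hp : (0:ℝ) < 2 ^ (l.count 1) := by positivity
    have hge : (1:ℝ) ≤ 2 ^ (l.count 1) := one_le_pow₀ (by norm_num)
    have hu0 : 0 < t / 2 ^ (l.count 1) := by positivity
    have hu1 : t / 2 ^ (l.count 1) ≤ 1 := by
      rw [div_le_one hp]; exact h1.trans hge
    have ha := hpos a (List.mem_cons_self)
    match a, ha with
    | 1, _ =>
      rw [xg1_mid hu0.le (by linarith)]
      have : ((1:ℕ) :: l).count 1 = l.count 1 + 1 := by simp [List.count_cons]
      rw [this, pow_succ]
      ring
    | (m+2), _ =>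
      rw [xg_fix (by push_cast; linarith)]
      have : ((m+2) :: l).count 1 = l.count 1 := by simp [List.count_cons]
      rw [this]

/-- Evaluation far to the right: translation by the length. -/
lemma W3 : ∀ (l : List ℕ) (t : ℝ), ((l.foldr max 0 : ℕ) : ℝ) + l.length + 1 ≤ t →
    ρ (wrd l) t = t - l.length := by
  intro l
  induction l with
  | nil => intro t _; simp
  | cons a l ih =>
    intro t ht
    have hM : ((l.foldr max 0 : ℕ) : ℝ) ≤ (((a :: l).foldr max 0 : ℕ) : ℝ) := by
      have : l.foldr max 0 ≤ (a :: l).foldr max 0 := by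
        simp [List.foldr]
      exact_mod_cast this
    have hlen : ((a :: l).length : ℝ) = l.length + 1 := by
      push_cast [List.length_cons]; ring
    have hin : ((l.foldr max 0 : ℕ) : ℝ) + l.length + 1 ≤ t := by
      rw [hlen] at ht; linarith
    rw [wrd_cons, map_mul, Equiv.Perm.mul_apply, ih t hin]
    have haM : (a : ℝ) ≤ (((a :: l).foldr max 0 : ℕ) : ℝ) := by
      have : a ≤ (a :: l).foldr max 0 := by simp [List.foldr]
      exact_mod_cast this
    cases a with
    | zero =>
      rw [xg0_eval, hlen]; ring
    | succ m =>
      rw [xg_right ?_]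
      · rw [hlen]; ring
      · rw [hlen] at ht
        push_cast at haM ⊢
        linarith

end Words

section Pos

lemma push_gt {k a : ℕ} (h : k < a) : (xg k)⁻¹ * xg a = xg (a+1) * (xg k)⁻¹ := by
  have := Rrel k a h
  calc (xg k)⁻¹ * xg a = ((xg k)⁻¹ * xg a * xg k) * (xg k)⁻¹ := by group
  _ = xg (a+1) * (xg k)⁻¹ := by rw [this]

lemma push_lt {a k : ℕ} (h : a < k) : (xg k)⁻¹ * xg a = xg a * (xg (k+1))⁻¹ := by
  have h1 := Rrel a k h
  have h2 : xg k * xg a = xg a * xg (k+1) := by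
    calc xg k * xg a = xg a * ((xg a)⁻¹ * xg k * xg a) := by group
    _ = xg a * xg (k+1) := by rw [h1]
  calc (xg k)⁻¹ * xg a = (xg k)⁻¹ * (xg a * xg (k+1)) * (xg (k+1))⁻¹ := by group
  _ = (xg k)⁻¹ * (xg k * xg a) * (xg (k+1))⁻¹ := by rw [← h2]
  _ = xg a * (xg (k+1))⁻¹ := by group

lemma swap_pos {k a : ℕ} (h : k < a) : xg a * xg k = xg k * xg (a+1) := by
  have := Rrel k a h
  calc xg a * xg k = xg k * ((xg k)⁻¹ * xg a * xg k) := by group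
  _ = xg k * xg (a+1) := by rw [this]

lemma push_word : ∀ (l : List ℕ) (k : ℕ),
    ∃ l' s : List ℕ, (xg k)⁻¹ * wrd l = wrd l' * (wrd s)⁻¹ := by
  intro l
  induction l with
  | nil => intro k; exact ⟨[], [k], by simp⟩
  | cons a l ih =>
    intro k
    rcases lt_trichotomy k a with h | rfl | h
    · obtain ⟨l', s, hl⟩ := ih k
      refine ⟨(a+1) :: l', s, ?_⟩
      rw [wrd_cons, wrd_cons, ← mul_assoc, push_gt h, mul_assoc, hl, mul_assoc]
    · exact ⟨l, [], by simp [wrd_cons, ← mul_assoc]⟩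
    · obtain ⟨l', s, hl⟩ := ih (k+1)
      refine ⟨a :: l', s, ?_⟩
      rw [wrd_cons, wrd_cons, ← mul_assoc, push_lt h, mul_assoc, hl, mul_assoc]

lemma inv_word_mul : ∀ (q l : List ℕ),
    ∃ l' q' : List ℕ, (wrd q)⁻¹ * wrd l = wrd l' * (wrd q')⁻¹ := by
  intro q
  induction q with
  | nil => intro l; exact ⟨l, [], by simp⟩
  | cons a q ih =>
    intro l
    obtain ⟨l₁, s, h1⟩ := push_word l a
    obtain ⟨l₂, q₂, h2⟩ := ih l₁
    refine ⟨l₂, s ++ q₂, ?_⟩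
    calc (wrd (a :: q))⁻¹ * wrd l = (wrd q)⁻¹ * ((xg a)⁻¹ * wrd l) := by
          rw [wrd_cons, mul_inv_rev]; group
    _ = (wrd q)⁻¹ * (wrd l₁ * (wrd s)⁻¹) := by rw [h1]
    _ = ((wrd q)⁻¹ * wrd l₁) * (wrd s)⁻¹ := by group
    _ = (wrd l₂ * (wrd q₂)⁻¹) * (wrd s)⁻¹ := by rw [h2]
    _ = wrd l₂ * (wrd (s ++ q₂))⁻¹ := by rw [wrd_append, mul_inv_rev]; group

/-- Every element of Thompson's group is a quotient of two positive words. -/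
lemma decomp (g : ThompsonF) : ∃ p q : List ℕ, g = wrd p * (wrd q)⁻¹ := by
  induction g using tf_induction with
  | h1 => exact ⟨[], [], by simp⟩
  | h0 => exact ⟨[0], [], by simp [wrd]; rfl⟩
  | hx1 => exact ⟨[1], [], by simp [wrd]; rfl⟩
  | hinv g hg =>
    obtain ⟨p, q, rfl⟩ := hg
    exact ⟨q, p, by group⟩
  | hmul g h hg hh =>
    obtain ⟨p, q, rfl⟩ := hg
    obtain ⟨r, t, rfl⟩ := hh
    obtain ⟨l', q', he⟩ := inv_word_mul q r
    refine ⟨p ++ l', t ++ q', ?_⟩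
    rw [wrd_append, wrd_append, mul_inv_rev]
    calc wrd p * (wrd q)⁻¹ * (wrd r * (wrd t)⁻¹)
        = wrd p * ((wrd q)⁻¹ * wrd r) * (wrd t)⁻¹ := by group
    _ = wrd p * (wrd l' * (wrd q')⁻¹) * (wrd t)⁻¹ := by rw [he]
    _ = wrd p * wrd l' * ((wrd q')⁻¹ * (wrd t)⁻¹) := by group

/-- Insertion (with index bump) used to sort positive words. -/
def ins (a : ℕ) : List ℕ → List ℕ
  | [] => [a]
  | b :: l => if a ≤ b then a :: b :: l else b :: ins (a+1) l

def srt (l : List ℕ) : List ℕ := l.foldr ins []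

lemma wrd_ins : ∀ (l : List ℕ) (a : ℕ), wrd (ins a l) = xg a * wrd l := by
  intro l
  induction l with
  | nil => intro a; simp [ins]
  | cons b l ih =>
    intro a
    by_cases h : a ≤ b
    · simp [ins, h]
    · push_neg at h
      simp only [ins, if_neg (not_le.2 h)]
      rw [wrd_cons, ih (a+1), wrd_cons, ← mul_assoc, ← mul_assoc, ← swap_pos h]

lemma wrd_srt (l : List ℕ) : wrd (srt l) = wrd l := by
  induction l with
  | nil => rfl
  | cons a l ih =>
    rw [wrd_cons, ← ih]
    exact wrd_ins _ a

lemma ins_lb : ∀ (l : List ℕ) (c a : ℕ), c ≤ a → (∀ b ∈ l, c ≤ b) →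
    ∀ b ∈ ins a l, c ≤ b := by
  intro l
  induction l with
  | nil =>
    intro c a hca _ b hb
    simp [ins] at hb
    omega
  | cons d l ih =>
    intro c a hca hl b hb
    by_cases h : a ≤ d
    · simp only [ins, if_pos h] at hb
      rcases List.mem_cons.1 hb with rfl | hb
      · exact hca
      · exact hl b hb
    · simp only [ins, if_neg h] at hb
      rcases List.mem_cons.1 hb with rfl | hb
      · exact hl b (List.mem_cons_self)
      · exact ih c (a+1) (by omega) (fun y hy => hl y (List.mem_cons_of_mem _ hy)) b hb

lemma ins_sorted : ∀ (l : List ℕ) (a : ℕ), l.Pairwise (· ≤ ·) → (ins a l).Pairwise (· ≤ ·) := by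
  intro l
  induction l with
  | nil => intro a _; simp [ins]
  | cons d l ih =>
    intro a hs
    rw [List.pairwise_cons] at hs
    obtain ⟨hd, hl⟩ := hs
    by_cases h : a ≤ d
    · simp only [ins, if_pos h]
      rw [List.pairwise_cons]
      refine ⟨?_, ?_⟩
      · intro b hb
        rcases List.mem_cons.1 hb with rfl | hb
        · exact h
        · exact h.trans (hd b hb)
      · rw [List.pairwise_cons]; exact ⟨hd, hl⟩
    · push_neg at h
      simp only [ins, if_neg (not_le.2 h)]
      rw [List.pairwise_cons]
      refine ⟨?_, ih (a+1) hl⟩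
      exact ins_lb l d (a+1) (by omega) hd

lemma srt_sorted (l : List ℕ) : (srt l).Pairwise (· ≤ ·) := by
  induction l with
  | nil => simp [srt]
  | cons a l ih => exact ins_sorted _ a ih

end Pos

section Faithful

lemma count0_eq {p q : List ℕ} (h : ρ (wrd p) = ρ (wrd q)) : p.count 0 = q.count 0 := by
  have h0 := DFunLike.congr_fun h (0 : ℝ)
  rw [W1 p 0 le_rfl, W1 q 0 le_rfl] at h0
  have : ((p.count 0 : ℝ)) = q.count 0 := by linarith
  exact_mod_cast this

lemma count1_eq {p q : List ℕ} (hp : ∀ a ∈ p, 1 ≤ a) (hq : ∀ a ∈ q, 1 ≤ a)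
    (h : ρ (wrd p) = ρ (wrd q)) : p.count 1 = q.count 1 := by
  have h0 := DFunLike.congr_fun h (1 : ℝ)
  rw [W2 p hp 1 one_pos le_rfl, W2 q hq 1 one_pos le_rfl] at h0
  field_simp at h0
  have h1 : 2 ^ p.count 1 = 2 ^ q.count 1 := by exact_mod_cast h0.symm
  exact Nat.pow_right_injective le_rfl h1

lemma sorted_head_le {a : ℕ} {l : List ℕ} (hs : (a :: l).Pairwise (· ≤ ·)) {b : ℕ}
    (hb : b ∈ a :: l) : a ≤ b := by
  rcases List.mem_cons.1 hb with rfl | hb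
  · exact le_rfl
  · exact (List.pairwise_cons.1 hs).1 b hb

lemma shift_wrd : ∀ (l : List ℕ), (∀ a ∈ l, 2 ≤ a) →
    wrd l = a0⁻¹ * wrd (l.map (· - 1)) * a0 := by
  intro l
  induction l with
  | nil => simp
  | cons a l ih =>
    intro h
    have ha := h a (List.mem_cons_self)
    have hxa : xg a = a0⁻¹ * xg (a - 1) * a0 := by
      have h1 : a - 1 + 1 = a := by omega
      rw [← h1, xg_succ (a-1) (by omega)]
      congr 1 <;> rw [h1]
    rw [List.map_cons, wrd_cons, wrd_cons, hxa,
      ih (fun b hb => h b (List.mem_cons_of_mem _ hb))]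
    group

lemma map_sub_sum : ∀ (l : List ℕ), (∀ a ∈ l, 1 ≤ a) →
    (l.map (· - 1)).sum + l.length = l.sum := by
  intro l
  induction l with
  | nil => simp
  | cons a l ih =>
    intro h
    have ha := h a (List.mem_cons_self)
    have := ih (fun b hb => h b (List.mem_cons_of_mem _ hb))
    simp only [List.map_cons, List.sum_cons, List.length_cons]
    omega

lemma map_sub_add : ∀ (l : List ℕ), (∀ a ∈ l, 1 ≤ a) →
    (l.map (· - 1)).map (· + 1) = l := by
  intro l
  induction l with
  | nil => simp
  | cons a l ih =>
    intro h
    have ha := h a (List.mem_cons_self)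
    simp only [List.map_cons]
    rw [ih (fun b hb => h b (List.mem_cons_of_mem _ hb))]
    congr 1
    omega

lemma sorted_inj : ∀ (N : ℕ) (p q : List ℕ),
    p.sum + p.length + q.sum + q.length ≤ N →
    p.Pairwise (· ≤ ·) → q.Pairwise (· ≤ ·) → ρ (wrd p) = ρ (wrd q) → p = q := by
  intro N
  induction N with
  | zero =>
    intro p q hm _ _ _
    have hp : p.length = 0 := by omega
    have hq : q.length = 0 := by omega
    rw [List.length_eq_zero_iff.1 hp, List.length_eq_zero_iff.1 hq]
  | succ N ih =>
    intro p q hm hsp hsq hρ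
    have hc0 := count0_eq hρ
    by_cases h0 : 0 < p.count 0
    · -- both lists start with 0
      have h0q : 0 < q.count 0 := hc0 ▸ h0
      have hp0 : 0 ∈ p := List.count_pos_iff.1 (by exact_mod_cast h0)
      have hq0 : 0 ∈ q := List.count_pos_iff.1 (by exact_mod_cast h0q)
      obtain ⟨a, p', rfl⟩ := List.exists_cons_of_ne_nil (List.ne_nil_of_mem hp0)
      obtain ⟨b, q', rfl⟩ := List.exists_cons_of_ne_nil (List.ne_nil_of_mem hq0)
      · have ha : a = 0 := Nat.le_zero.1 (sorted_head_le hsp hp0)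
        have hb : b = 0 := Nat.le_zero.1 (sorted_head_le hsq hq0)
        subst ha hb
        have hcan : ρ (wrd p') = ρ (wrd q') := by
          have : ρ (xg 0) * ρ (wrd p') = ρ (xg 0) * ρ (wrd q') := by
            rw [← map_mul, ← map_mul, ← wrd_cons, ← wrd_cons]
            exact hρ
          exact mul_left_cancel this
        have := ih p' q' (by simp [List.sum_cons, List.length_cons] at hm ⊢; omega)
          (List.pairwise_cons.1 hsp).2 (List.pairwise_cons.1 hsq).2 hcan
        rw [this]
    · -- no zeros
      push_neg at h0
      have hc0p : p.count 0 = 0 := Nat.le_zero.1 h0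
      have hc0q : q.count 0 = 0 := hc0 ▸ hc0p
      have hp1 : ∀ a ∈ p, 1 ≤ a := by
        intro a ha
        rcases Nat.eq_zero_or_pos a with rfl | h
        · exact absurd (List.count_pos_iff.2 ha) (by omega)
        · exact h
      have hq1 : ∀ a ∈ q, 1 ≤ a := by
        intro a ha
        rcases Nat.eq_zero_or_pos a with rfl | h
        · exact absurd (List.count_pos_iff.2 ha) (by omega)
        · exact h
      have hc1 := count1_eq hp1 hq1 hρ
      by_cases h1 : 0 < p.count 1
      · have h1q : 0 < q.count 1 := hc1 ▸ h1
        have hp0 : 1 ∈ p := List.count_pos_iff.1 (by exact_mod_cast h1)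
        have hq0 : 1 ∈ q := List.count_pos_iff.1 (by exact_mod_cast h1q)
        obtain ⟨a, p', rfl⟩ := List.exists_cons_of_ne_nil (List.ne_nil_of_mem hp0)
        obtain ⟨b, q', rfl⟩ := List.exists_cons_of_ne_nil (List.ne_nil_of_mem hq0)
        · have ha : a = 1 := le_antisymm (sorted_head_le hsp hp0)
            (hp1 a (List.mem_cons_self))
          have hb : b = 1 := le_antisymm (sorted_head_le hsq hq0)
            (hq1 b (List.mem_cons_self))
          subst ha hb
          have hcan : ρ (wrd p') = ρ (wrd q') := by
            have : ρ (xg 1) * ρ (wrd p') = ρ (xg 1) * ρ (wrd q') := by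
              rw [← map_mul, ← map_mul, ← wrd_cons, ← wrd_cons]
              exact hρ
            exact mul_left_cancel this
          have := ih p' q' (by simp [List.sum_cons, List.length_cons] at hm ⊢; omega)
            (List.pairwise_cons.1 hsp).2 (List.pairwise_cons.1 hsq).2 hcan
          rw [this]
      · push_neg at h1
        have hc1p : p.count 1 = 0 := Nat.le_zero.1 h1
        have hc1q : q.count 1 = 0 := hc1 ▸ hc1p
        have hp2 : ∀ a ∈ p, 2 ≤ a := by
          intro a ha
          have h1a := hp1 a ha
          by_contra hlt
          push_neg at hlt
          have : a = 1 := by omega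
          subst this
          exact absurd (List.count_pos_iff.2 ha) (by omega)
        have hq2 : ∀ a ∈ q, 2 ≤ a := by
          intro a ha
          have h1a := hq1 a ha
          by_contra hlt
          push_neg at hlt
          have : a = 1 := by omega
          subst this
          exact absurd (List.count_pos_iff.2 ha) (by omega)
        by_cases hboth : p = [] ∧ q = []
        · rw [hboth.1, hboth.2]
        · have hlen : 1 ≤ p.length + q.length := by
            rcases Nat.eq_zero_or_pos (p.length + q.length) with h | h
            · exfalso
              exact hboth ⟨List.length_eq_zero_iff.1 (by omega), List.length_eq_zero_iff.1 (by omega)⟩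
            · exact h
          set p₂ := p.map (· - 1) with hp₂
          set q₂ := q.map (· - 1) with hq₂
          have hshift : ρ (wrd p₂) = ρ (wrd q₂) := by
            have e1 : ρ (a0⁻¹ * wrd p₂ * a0) = ρ (a0⁻¹ * wrd q₂ * a0) := by
              rw [← shift_wrd p hp2, ← shift_wrd q hq2]
              exact hρ
            have e2 : ρ a0⁻¹ * ρ (wrd p₂) * ρ a0 = ρ a0⁻¹ * ρ (wrd q₂) * ρ a0 := by
              simpa [map_mul, map_inv] using e1
            exact mul_left_cancel (mul_right_cancel e2)
          have hsump : p₂.sum + p.length = p.sum := map_sub_sum p hp1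
          have hsumq : q₂.sum + q.length = q.sum := map_sub_sum q hq1
          have hlenp : p₂.length = p.length := List.length_map _
          have hlenq : q₂.length = q.length := List.length_map _
          have hrec := ih p₂ q₂ (by omega)
            (List.Pairwise.map _ (fun a b h => Nat.sub_le_sub_right h 1) hsp)
            (List.Pairwise.map _ (fun a b h => Nat.sub_le_sub_right h 1) hsq) hshift
          have : p₂.map (· + 1) = q₂.map (· + 1) := by rw [hrec]
          rwa [hp₂, hq₂, map_sub_add p hp1, map_sub_add q hq1] at this

end Faithful

/-- The representation `ρ` is faithful. -/
lemma rho_eq_one {g : ThompsonF} (h : ρ g = 1) : g = 1 := by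
  obtain ⟨p, q, rfl⟩ := decomp g
  have h1 : ρ (wrd p) = ρ (wrd q) := by
    have : ρ (wrd p) * (ρ (wrd q))⁻¹ = 1 := by
      rw [← map_inv, ← map_mul]; exact h
    exact mul_inv_eq_one.1 this
  have h2 : ρ (wrd (srt p)) = ρ (wrd (srt q)) := by
    rw [wrd_srt, wrd_srt]; exact h1
  have h3 := sorted_inj ((srt p).sum + (srt p).length + (srt q).sum + (srt q).length)
    (srt p) (srt q) le_rfl (srt_sorted p) (srt_sorted q) h2
  have h4 : wrd p = wrd q := by
    rw [← wrd_srt p, ← wrd_srt q, h3]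
  rw [h4, mul_inv_cancel]

lemma rho_injective : Function.Injective ρ := by
  intro a b h
  have h1 : ρ (a * b⁻¹) = 1 := by
    rw [map_mul, map_inv, h, mul_inv_cancel]
  exact mul_inv_eq_one.1 (rho_eq_one h1)

section Homs

/-- The homomorphism counting occurrences of `x₀` (germ at `-∞`). -/
def ν : ThompsonF →* Multiplicative ℤ :=
  toGrp (f := fun b => match b with
    | false => Multiplicative.ofAdd 1
    | true => 1) (lift_rels (Commute.all _ _) (Commute.all _ _))

/-- The homomorphism measuring total word length (germ at `+∞`). -/
def μh : ThompsonF →* Multiplicative ℤ :=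
  toGrp (f := fun _ => Multiplicative.ofAdd 1)
    (lift_rels (Commute.all _ _) (Commute.all _ _))

@[simp] lemma ν_a0 : ν a0 = Multiplicative.ofAdd 1 := toGrp_a0 _
@[simp] lemma ν_a1 : ν a1 = 1 := toGrp_a1 _
@[simp] lemma μh_a0 : μh a0 = Multiplicative.ofAdd 1 := toGrp_a0 _
@[simp] lemma μh_a1 : μh a1 = Multiplicative.ofAdd 1 := toGrp_a1 _

lemma ν_xg : ∀ n, ν (xg n) = if n = 0 then Multiplicative.ofAdd 1 else 1 := by
  intro n
  match n with
  | 0 => simp [xg]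
  | 1 => simp [xg]
  | (m+2) =>
    have : xg (m+2) = a0⁻¹ * xg (m+1) * a0 := rfl
    rw [this]
    have ih := ν_xg (m+1)
    simp only [map_mul, map_inv, ih]
    simp [mul_comm]

lemma μh_xg : ∀ n, μh (xg n) = Multiplicative.ofAdd 1 := by
  intro n
  match n with
  | 0 => simp [xg]
  | 1 => simp [xg]
  | (m+2) =>
    have : xg (m+2) = a0⁻¹ * xg (m+1) * a0 := rfl
    rw [this]
    have ih := μh_xg (m+1)
    simp only [map_mul, map_inv, ih]
    simp [mul_comm]

lemma ν_wrd (l : List ℕ) : ν (wrd l) = Multiplicative.ofAdd (l.count 0 : ℤ) := by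
  induction l with
  | nil => simp
  | cons a l ih =>
    rw [wrd_cons, map_mul, ih, ν_xg]
    by_cases h : a = 0
    · subst h
      simp [List.count_cons, ← ofAdd_add]
      ring
    · simp [h, List.count_cons]

lemma μh_wrd (l : List ℕ) : μh (wrd l) = Multiplicative.ofAdd (l.length : ℤ) := by
  induction l with
  | nil => simp
  | cons a l ih =>
    rw [wrd_cons, map_mul, ih, μh_xg]
    simp [List.length_cons, ← ofAdd_add]
    ring

/-- Commutators die under homomorphisms to commutative groups. -/
lemma comm_hom_kill {H : Type*} [CommGroup H] (φ : ThompsonF →* H) (x y : ThompsonF) :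
    φ ⁅x, y⁆ = 1 := by
  rw [map_commutatorElement]
  exact commutatorElement_eq_one_iff_commute.2 (Commute.all _ _)

/-- Elements killed by both germ homomorphisms have boundedly supported image. -/
lemma bounded_support {g : ThompsonF} (hν : ν g = 1) (hμ : μh g = 1) :
    ∃ M : ℝ, 0 < M ∧ ∀ t : ℝ, t ≤ -M ∨ M ≤ t → ρ g t = t := by
  obtain ⟨p, q, rfl⟩ := decomp g
  have hc0 : p.count 0 = q.count 0 := by
    have : ν (wrd p) * (ν (wrd q))⁻¹ = 1 := by
      rw [← map_inv, ← map_mul]; exact hν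
    rw [ν_wrd, ν_wrd] at this
    have h2 : (p.count 0 : ℤ) = q.count 0 := by
      have := mul_inv_eq_one.1 this
      exact_mod_cast Multiplicative.ofAdd.injective this
    exact_mod_cast h2
  have hlen : p.length = q.length := by
    have : μh (wrd p) * (μh (wrd q))⁻¹ = 1 := by
      rw [← map_inv, ← map_mul]; exact hμ
    rw [μh_wrd, μh_wrd] at this
    have h2 : (p.length : ℤ) = q.length := by
      have := mul_inv_eq_one.1 this
      exact_mod_cast Multiplicative.ofAdd.injective this
    exact_mod_cast h2
  set Kp := (p.foldr max 0 : ℕ) with hKp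
  set Kq := (q.foldr max 0 : ℕ) with hKq
  refine ⟨(q.count 0 : ℝ) + Kp + Kq + p.length + q.length + 1, by positivity, ?_⟩
  intro t ht
  have hq0 : (0:ℝ) ≤ q.count 0 := by positivity
  have hKp0 : (0:ℝ) ≤ Kp := by positivity
  have hKq0 : (0:ℝ) ≤ Kq := by positivity
  have hlp0 : (0:ℝ) ≤ p.length := by positivity
  have hlq0 : (0:ℝ) ≤ q.length := by positivity
  rcases ht with ht | ht
  · -- far left
    have h1 : ρ (wrd q) (t + q.count 0) = t := by
      rw [W1 q _ (by linarith)]; ring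
    have h2 : (ρ (wrd q))⁻¹ t = t + q.count 0 := by
      have h3 := congrArg (fun s => (ρ (wrd q))⁻¹ s) h1
      simp only [perm_inv_apply_self] at h3
      exact h3.symm
    rw [map_mul, map_inv, Equiv.Perm.mul_apply, h2, W1 p _ (by linarith), hc0]
    ring
  · -- far right
    have h1 : ρ (wrd q) (t + q.length) = t := by
      rw [W3 q _ (by push_cast; linarith)]; ring
    have h2 : (ρ (wrd q))⁻¹ t = t + q.length := by
      have h3 := congrArg (fun s => (ρ (wrd q))⁻¹ s) h1
      simp only [perm_inv_apply_self] at h3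
      exact h3.symm
    rw [map_mul, map_inv, Equiv.Perm.mul_apply, h2, ← hlen, W3 p _ (by push_cast; linarith)]
    ring

end Homs

section Dynamics

lemma rho_a1_pow (N : ℕ) : ρ (a1 ^ N) = (f1 ^ N : Equiv.Perm ℝ) := by
  rw [map_pow, rho_a1]

lemma f1_pow_succ_apply (N : ℕ) (t : ℝ) :
    (f1 ^ (N+1) : Equiv.Perm ℝ) t = (f1 ^ N : Equiv.Perm ℝ) (f1fun t) := by
  rw [pow_succ, Equiv.Perm.mul_apply]
  rfl

lemma f1_pow_succ_apply' (N : ℕ) (t : ℝ) :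
    (f1 ^ (N+1) : Equiv.Perm ℝ) t = f1fun ((f1 ^ N : Equiv.Perm ℝ) t) := by
  rw [pow_succ', Equiv.Perm.mul_apply]
  rfl

lemma f1_pow_pos : ∀ (N : ℕ) {t : ℝ}, 0 < t → 0 < (f1 ^ N : Equiv.Perm ℝ) t := by
  intro N
  induction N with
  | zero => intro t ht; simpa using ht
  | succ N ih =>
    intro t ht
    rw [f1_pow_succ_apply]
    exact ih (f1fun_pos ht)

lemma f1_pow_mono (N : ℕ) : Monotone ((f1 ^ N : Equiv.Perm ℝ) : ℝ → ℝ) := by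
  have : StrictMono ((f1 ^ N : Equiv.Perm ℝ) : ℝ → ℝ) := by
    have := rho_strictMono (a1 ^ N)
    rwa [rho_a1_pow] at this
  exact this.monotone

lemma f1_pow_le_max : ∀ (N : ℕ) (t : ℝ), (f1 ^ N : Equiv.Perm ℝ) t ≤ max 2 (t - N) := by
  intro N
  induction N with
  | zero => intro t; simp [le_max_iff]
  | succ N ih =>
    intro t
    have hcast : ((N+1 : ℕ):ℝ) = (N:ℝ) + 1 := by push_cast; ring
    rw [f1_pow_succ_apply, hcast]
    rcases le_or_gt t 2 with h | h
    · have h1 : f1fun t ≤ 2 := by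
        rcases le_or_gt t 0 with h0 | h0
        · rw [f1fun_left h0]; linarith
        · rw [f1fun_mid h0.le h]; linarith
      have := ih (f1fun t)
      have h2 : max 2 (f1fun t - N) = 2 := by
        rw [max_eq_left]; linarith
      rw [h2] at this
      calc (f1 ^ N : Equiv.Perm ℝ) (f1fun t) ≤ 2 := this
      _ ≤ max 2 (t - ((N:ℝ)+1)) := le_max_left _ _
    · rw [f1fun_right h.le]
      calc (f1 ^ N : Equiv.Perm ℝ) (t - 1) ≤ max 2 (t - 1 - N) := ih _
      _ ≤ max 2 (t - ((N:ℝ)+1)) := by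
          apply max_le_max le_rfl
          linarith

lemma f1_pow_halve : ∀ (j : ℕ) {s : ℝ}, 0 < s → s ≤ 2 →
    (f1 ^ j : Equiv.Perm ℝ) s ≤ s / 2 ^ j := by
  intro j
  induction j with
  | zero => intro s _ _; simp
  | succ j ih =>
    intro s hs hs2
    rw [f1_pow_succ_apply']
    have h1 : 0 < (f1 ^ j : Equiv.Perm ℝ) s := f1_pow_pos j hs
    have h2 : (f1 ^ j : Equiv.Perm ℝ) s ≤ s / 2 ^ j := ih hs hs2
    have h3 : s / 2 ^ j ≤ 2 := by
      have : (1:ℝ) ≤ 2 ^ j := one_le_pow₀ (by norm_num)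
      rw [div_le_iff₀ (by positivity)]
      nlinarith
    rw [f1fun_mid h1.le (h2.trans h3)]
    rw [pow_succ]
    calc (f1 ^ j : Equiv.Perm ℝ) s / 2 ≤ (s / 2 ^ j) / 2 := by linarith
    _ = s / (2 ^ j * 2) := by ring

lemma f1_pow_small (t ε : ℝ) (ht : 0 < t) (hε : 0 < ε) :
    ∃ N : ℕ, (f1 ^ N : Equiv.Perm ℝ) t < ε ∧ 0 < (f1 ^ N : Equiv.Perm ℝ) t := by
  obtain ⟨n, hn⟩ := exists_nat_ge t
  obtain ⟨j, hj⟩ := pow_unbounded_of_one_lt (2/ε) (by norm_num : (1:ℝ) < 2)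
  refine ⟨j + n, ?_, f1_pow_pos _ ht⟩
  have hsplit : (f1 ^ (j + n) : Equiv.Perm ℝ) t = (f1 ^ j : Equiv.Perm ℝ) ((f1 ^ n : Equiv.Perm ℝ) t) := by
    rw [pow_add, Equiv.Perm.mul_apply]
  have h1 : (f1 ^ n : Equiv.Perm ℝ) t ≤ 2 := by
    have := f1_pow_le_max n t
    have h2 : max 2 (t - n) = 2 := by
      rw [max_eq_left]; linarith
    rwa [h2] at this
  have h0 : 0 < (f1 ^ n : Equiv.Perm ℝ) t := f1_pow_pos _ ht
  rw [hsplit]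
  have h3 := f1_pow_halve j h0 h1
  have h4 : (f1 ^ n : Equiv.Perm ℝ) t / 2 ^ j ≤ 2 / 2 ^ j := by
    have : (0:ℝ) < 2 ^ j := by positivity
    exact div_le_div_of_nonneg_right h1 this.le |>.trans_eq rfl
  have h5 : (2:ℝ) / 2 ^ j < ε := by
    rw [div_lt_iff₀ (by positivity)]
    rw [div_lt_iff₀ hε] at hj
    linarith
  linarith

lemma rho_a0_zpow : ∀ (k : ℤ) (t : ℝ), ρ (a0 ^ k) t = t - k := by
  intro k
  induction k using Int.induction_on with
  | zero => intro t; simp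
  | succ n ih =>
    intro t
    rw [zpow_add_one, map_mul, Equiv.Perm.mul_apply, rho_a0, f0_apply, ih]
    push_cast
    ring
  | pred n ih =>
    intro t
    rw [zpow_sub_one, map_mul, Equiv.Perm.mul_apply, map_inv, rho_a0, f0_inv_apply, ih]
    push_cast
    ring

/-- Compression: a group element squeezing any bounded interval into `(0, ε)`. -/
lemma compress (Mb ε : ℝ) (hε : 0 < ε) :
    ∃ h : ThompsonF, ∀ t : ℝ, -Mb ≤ t → t ≤ Mb → 0 < ρ h t ∧ ρ h t < ε := by
  obtain ⟨K, hK⟩ := exists_nat_ge (|Mb| + 1)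
  have habs1 : Mb ≤ |Mb| := le_abs_self Mb
  have habs2 : -Mb ≤ |Mb| := neg_le_abs Mb
  obtain ⟨N, hN, _⟩ := f1_pow_small (K + Mb) ε (by linarith) hε
  refine ⟨a1 ^ N * a0 ^ (-(K:ℤ)), ?_⟩
  intro t h1 h2
  rw [map_mul, Equiv.Perm.mul_apply, rho_a0_zpow, rho_a1_pow]
  have he : t - (-(K:ℤ) : ℤ) = t + K := by push_cast; ring
  rw [he]
  constructor
  · apply f1_pow_pos
    linarith
  · calc (f1 ^ N : Equiv.Perm ℝ) (t + K) ≤ (f1 ^ N : Equiv.Perm ℝ) (K + Mb) :=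
      f1_pow_mono N (by linarith)
    _ < ε := hN

/-- Every dyadic rational is in the orbit of `0`. -/
lemma dyadic_orbit : ∀ (j : ℕ) (m : ℤ), ∃ h : ThompsonF, ρ h 0 = (m : ℝ) / 2 ^ j := by
  intro j
  induction j with
  | zero =>
    intro m
    refine ⟨a0 ^ (-m), ?_⟩
    rw [rho_a0_zpow]
    push_cast
    ring
  | succ j ih =>
    intro m
    set k := m / 2 ^ (j+1) with hk
    set r := m % 2 ^ (j+1) with hr
    have hr0 : 0 ≤ r := Int.emod_nonneg m (by positivity)
    have hrlt : r < 2 ^ (j+1) := Int.emod_lt_of_pos m (by positivity)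
    have hm : m = 2 ^ (j+1) * k + r := (Int.mul_ediv_add_emod m _).symm
    obtain ⟨h', hh'⟩ := ih r
    have hs0 : (0:ℝ) ≤ (r:ℝ) / 2 ^ j := by positivity
    have hs2 : (r:ℝ) / 2 ^ j ≤ 2 := by
      rw [div_le_iff₀ (by positivity)]
      have : (r:ℝ) < 2 ^ (j+1) := by exact_mod_cast hrlt
      rw [pow_succ] at this
      linarith
    refine ⟨a0 ^ (-k) * a1 * h', ?_⟩
    rw [map_mul, map_mul, Equiv.Perm.mul_apply, Equiv.Perm.mul_apply, hh', rho_a1,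
      f1_apply, f1fun_mid hs0 hs2, rho_a0_zpow]
    push_cast [hm]
    rw [pow_succ]
    field_simp
    ring

/-- A dyadic rational strictly between any two reals. -/
lemma dyadic_between {x y : ℝ} (h : x < y) :
    ∃ (j : ℕ) (m : ℤ), x < (m:ℝ) / 2 ^ j ∧ (m:ℝ) / 2 ^ j < y := by
  obtain ⟨j, hj⟩ := pow_unbounded_of_one_lt (1/(y-x)) (by norm_num : (1:ℝ) < 2)
  refine ⟨j, ⌊x * 2 ^ j⌋ + 1, ?_, ?_⟩
  · rw [lt_div_iff₀ (by positivity)]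
    push_cast
    have := Int.lt_floor_add_one (x * 2 ^ j)
    linarith
  · rw [div_lt_iff₀ (by positivity)]
    push_cast
    have h1 := Int.floor_le (x * 2 ^ j)
    have h2 : 1 / (y - x) < 2 ^ j := hj
    rw [div_lt_iff₀ (by linarith)] at h2
    nlinarith

/-- A strictly monotone permutation fixing all dyadics is the identity. -/
lemma fix_dyadics_id {u : Equiv.Perm ℝ} (hm : StrictMono u)
    (hfix : ∀ (j : ℕ) (m : ℤ), u ((m:ℝ) / 2 ^ j) = (m:ℝ) / 2 ^ j) (t : ℝ) : u t = t := by
  rcases lt_trichotomy (u t) t with h | h | h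
  · obtain ⟨j, m, h1, h2⟩ := dyadic_between h
    have h3 : u ((m:ℝ)/2^j) < u t := hm h2
    rw [hfix j m] at h3
    linarith
  · exact h
  · obtain ⟨j, m, h1, h2⟩ := dyadic_between h
    have h3 : u t < u ((m:ℝ)/2^j) := hm h1
    rw [hfix j m] at h3
    linarith

/-- Central elements of Thompson's group are trivial. -/
lemma central_eq_one {z : ThompsonF} (hz : ∀ g, z * g = g * z) : z = 1 := by
  apply rho_eq_one
  apply Equiv.ext
  intro t
  show ρ z t = (1 : Equiv.Perm ℝ) t
  have key : ∀ (j : ℕ) (m : ℤ), ρ z ((m:ℝ) / 2 ^ j) = (m:ℝ) / 2 ^ j := by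
    intro j m
    obtain ⟨h, hh⟩ := dyadic_orbit j m
    set d := (m:ℝ) / 2 ^ j with hd
    obtain ⟨φ, hφ⟩ : ∃ φ : ThompsonF, φ = h * a1 * h⁻¹ := ⟨_, rfl⟩
    have hinvd : (ρ h)⁻¹ d = 0 := by
      rw [← hh]
      exact perm_inv_apply_self _ _
    have hφρ : ∀ s : ℝ, ρ φ s = ρ h (f1fun ((ρ h)⁻¹ s)) := by
      intro s
      rw [hφ, map_mul, map_mul, map_inv, Equiv.Perm.mul_apply, Equiv.Perm.mul_apply,
        rho_a1, f1_apply]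
    have hfixd : ρ φ d = d := by
      rw [hφρ, hinvd, f1fun_left le_rfl, hh]
    -- fixed points of ρ φ under ρ z
    have main : ∀ w : ThompsonF, (∀ g, w * g = g * w) → (ρ h)⁻¹ (ρ w d) ≤ 0 := by
      intro w hw
      have hcom : ρ w (ρ φ d) = ρ φ (ρ w d) := by
        have e : ρ (w * φ) = ρ (φ * w) := congrArg ρ (hw φ)
        calc ρ w (ρ φ d) = ρ (w * φ) d := by rw [map_mul]; rfl
        _ = ρ (φ * w) d := by rw [e]
        _ = ρ φ (ρ w d) := by rw [map_mul]; rfl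
      rw [hfixd] at hcom
      -- hcom : ρ w d = ρ φ (ρ w d)
      have h2 : f1fun ((ρ h)⁻¹ (ρ w d)) = (ρ h)⁻¹ (ρ w d) := by
        have h3 : ρ h (f1fun ((ρ h)⁻¹ (ρ w d))) = ρ h ((ρ h)⁻¹ (ρ w d)) := by
          rw [← hφρ, ← hcom]
          simp
        exact (rho_strictMono h).injective h3
      exact (f1_fix_iff _).1 h2
    have hzle := main z hz
    have hzinvle := main z⁻¹ (fun g => by
      have := hz g⁻¹
      calc z⁻¹ * g = z⁻¹ * g * z * z⁻¹ := by group
      _ = z⁻¹ * (g * z) * z⁻¹ := by group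
      _ = z⁻¹ * (z * g) * z⁻¹ := by rw [← hz g]
      _ = g * z⁻¹ := by group)
    -- conclude ρ z d = d
    by_contra hne
    rcases lt_trichotomy (ρ z d) d with hlt | heq | hgt
    · have hd5 : d < ρ z⁻¹ d := by
        rw [map_inv]
        have := perm_inv_strictMono (rho_strictMono z) hlt
        rwa [perm_inv_apply_self] at this
      have h5 : (0:ℝ) < (ρ h)⁻¹ (ρ z⁻¹ d) := by
        have := perm_inv_strictMono (rho_strictMono h) hd5
        rwa [hinvd] at this
      linarith [hzinvle]
    · exact hne heq
    · have h5 : (0:ℝ) < (ρ h)⁻¹ (ρ z d) := by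
        have := perm_inv_strictMono (rho_strictMono h) hgt
        rwa [hinvd] at this
      linarith [hzle]
  simp only [Equiv.Perm.one_apply]
  exact fix_dyadics_id (rho_strictMono z) key t

end Dynamics

section Main

lemma conj_ne_one {g b : ThompsonF} (hb : b ≠ 1) : g * b * g⁻¹ ≠ 1 := by
  intro h
  apply hb
  calc b = g⁻¹ * (g * b * g⁻¹) * g := by group
  _ = g⁻¹ * 1 * g := by rw [h]
  _ = 1 := by group

lemma exists_moved {c : ThompsonF} (hc : c ≠ 1) : ∃ q : ℝ, ρ c q ≠ q := by
  by_contra hfix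
  push_neg at hfix
  apply hc
  apply rho_eq_one
  apply Equiv.ext
  intro t
  exact hfix t

lemma moving_aux {a b : ThompsonF} (hb : b ≠ 1)
    {p : ℝ} (hp : p < ρ a p)
    {Mb : ℝ} (hsb : ∀ t : ℝ, t ≤ -Mb ∨ Mb ≤ t → ρ b t = t)
    (hcomm : ∀ g : ThompsonF, a * (g * b * g⁻¹) = (g * b * g⁻¹) * a) : False := by
  obtain ⟨j, m, hd1, hd2⟩ := dyadic_between hp
  obtain ⟨j', m', hd3, hd4⟩ := dyadic_between hd2
  obtain ⟨w, hw⟩ := dyadic_orbit j m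
  have hδpos : 0 < (ρ w)⁻¹ ((m':ℝ)/2^j') := by
    have h0 : ρ w 0 < (m':ℝ)/2^j' := by rw [hw]; exact hd3
    have := perm_inv_strictMono (rho_strictMono w) h0
    rwa [perm_inv_apply_self] at this
  obtain ⟨h, hcomp⟩ := compress Mb ((ρ w)⁻¹ ((m':ℝ)/2^j')) hδpos
  -- the conjugating element
  obtain ⟨g, hg⟩ : ∃ g : ThompsonF, g = w * h := ⟨_, rfl⟩
  obtain ⟨c, hcdef⟩ : ∃ c : ThompsonF, c = g * b * g⁻¹ := ⟨_, rfl⟩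
  have hceval : ∀ t : ℝ, ρ c t = ρ g (ρ b ((ρ g)⁻¹ t)) := by
    intro t
    rw [hcdef, map_mul, map_mul, map_inv, Equiv.Perm.mul_apply, Equiv.Perm.mul_apply]
  have hgeval : ∀ u : ℝ, ρ g u = ρ w (ρ h u) := by
    intro u
    rw [hg, map_mul, Equiv.Perm.mul_apply]
  have hsupp : ∀ t : ℝ, ρ c t ≠ t → p < t ∧ t < ρ a p := by
    intro t ht
    have hs : ρ b ((ρ g)⁻¹ t) ≠ (ρ g)⁻¹ t := by
      intro hfix
      apply ht
      rw [hceval, hfix]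
      exact perm_apply_inv_self _ _
    have hsin : ¬((ρ g)⁻¹ t ≤ -Mb ∨ Mb ≤ (ρ g)⁻¹ t) := fun hor => hs (hsb _ hor)
    push_neg at hsin
    obtain ⟨hs1, hs2⟩ := hsin
    obtain ⟨hu1, hu2⟩ := hcomp ((ρ g)⁻¹ t) hs1.le hs2.le
    have ht2 : t = ρ w (ρ h ((ρ g)⁻¹ t)) := by
      have e1 := (hgeval ((ρ g)⁻¹ t)).symm
      rw [perm_apply_inv_self] at e1
      exact e1.symm
    constructor
    · have : ρ w 0 < ρ w (ρ h ((ρ g)⁻¹ t)) := rho_strictMono w hu1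
      rw [hw] at this
      rw [ht2]
      linarith
    · have : ρ w (ρ h ((ρ g)⁻¹ t)) < ρ w ((ρ w)⁻¹ ((m':ℝ)/2^j')) := rho_strictMono w hu2
      rw [perm_apply_inv_self] at this
      rw [ht2]
      linarith
  have hcne : c ≠ 1 := by rw [hcdef]; exact conj_ne_one hb
  obtain ⟨q, hq0⟩ := exists_moved hcne
  obtain ⟨hq1, hq2⟩ := hsupp q hq0
  -- commutation between a and c
  have hac : ∀ t : ℝ, ρ a (ρ c t) = ρ c (ρ a t) := by
    intro t
    have e : ρ (a * c) = ρ (c * a) := by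
      rw [hcdef]
      exact congrArg ρ (hcomm g)
    calc ρ a (ρ c t) = ρ (a * c) t := by rw [map_mul]; rfl
    _ = ρ (c * a) t := by rw [e]
    _ = ρ c (ρ a t) := by rw [map_mul]; rfl
  have haq : ρ a p < ρ a q := rho_strictMono a hq1
  have hfixaq : ρ c (ρ a q) = ρ a q := by
    by_contra hc2
    obtain ⟨_, h2⟩ := hsupp _ hc2
    linarith
  have := hac q
  rw [hfixaq] at this
  exact hq0 ((rho_strictMono a).injective this)

lemma moving_conj {a b : ThompsonF} (ha : a ≠ 1) (hb : b ≠ 1)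
    {Mb : ℝ} (hsb : ∀ t : ℝ, t ≤ -Mb ∨ Mb ≤ t → ρ b t = t)
    (hcomm : ∀ f g : ThompsonF, (f * a * f⁻¹) * (g * b * g⁻¹) = (g * b * g⁻¹) * (f * a * f⁻¹)) :
    False := by
  have hcomm1 : ∀ g : ThompsonF, a * (g * b * g⁻¹) = (g * b * g⁻¹) * a := by
    intro g
    have := hcomm 1 g
    simpa using this
  obtain ⟨p, hp⟩ := exists_moved ha
  rcases lt_or_gt_of_ne hp with h | h
  · -- ρ a p < p : use a⁻¹
    have hp' : p < ρ a⁻¹ p := by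
      rw [map_inv]
      have := perm_inv_strictMono (rho_strictMono a) h
      rwa [perm_inv_apply_self] at this
    have hcomm1' : ∀ g : ThompsonF, a⁻¹ * (g * b * g⁻¹) = (g * b * g⁻¹) * a⁻¹ := by
      intro g
      have e := hcomm1 g
      calc a⁻¹ * (g * b * g⁻¹) = a⁻¹ * ((g * b * g⁻¹) * a) * a⁻¹ := by group
      _ = a⁻¹ * (a * (g * b * g⁻¹)) * a⁻¹ := by rw [← e]
      _ = (g * b * g⁻¹) * a⁻¹ := by group
    exact moving_aux hb hp' hsb hcomm1'
  · exact moving_aux hb h hsb hcomm1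

end Main

section Assembly

lemma subgroup_exists_ne_one {A : Subgroup ThompsonF} (hA : A ≠ ⊥) :
    ∃ x ∈ A, x ≠ 1 := by
  by_contra hc
  push_neg at hc
  exact hA ((Subgroup.eq_bot_iff_forall A).2 hc)

theorem main_result (A B : Subgroup ThompsonF)
    (hA : A.Normal) (hB : B.Normal) (hinf : A ⊓ B = ⊥) (hsup : A ⊔ B = ⊤) :
    A = ⊥ ∨ B = ⊥ := by
  by_contra hcon
  push_neg at hcon
  obtain ⟨hA0, hB0⟩ := hcon
  -- elements of A and B commute
  have hcommAB : ∀ x ∈ A, ∀ y ∈ B, x * y = y * x := by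
    intro x hx y hy
    have h1 : x * y * x⁻¹ * y⁻¹ ∈ A ⊓ B := by
      constructor
      · have h2 : x * (y * x⁻¹ * y⁻¹) ∈ A :=
          A.mul_mem hx (hA.conj_mem x⁻¹ (A.inv_mem hx) y)
        have e : x * (y * x⁻¹ * y⁻¹) = x * y * x⁻¹ * y⁻¹ := by group
        rwa [e] at h2
      · exact B.mul_mem (hB.conj_mem y hy x) (B.inv_mem hy)
    rw [hinf, Subgroup.mem_bot] at h1
    calc x * y = (x * y * x⁻¹ * y⁻¹) * (y * x) := by group
    _ = 1 * (y * x) := by rw [h1]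
    _ = y * x := one_mul _
  -- a central nontrivial element is impossible
  have hnocentral : ∀ z : ThompsonF, z ≠ 1 → ¬ (∀ g, z * g = g * z) := by
    intro z hz hcentral
    exact hz (central_eq_one hcentral)
  -- main case analysis
  by_cases hAab : ∀ x ∈ A, ∀ y ∈ A, x * y = y * x
  · -- A abelian : any nontrivial element of A is central
    obtain ⟨z, hzA, hz1⟩ := subgroup_exists_ne_one hA0
    refine hnocentral z hz1 ?_
    intro g
    have hg : g ∈ A ⊔ B := by rw [hsup]; exact Subgroup.mem_top g
    rw [← Subgroup.closure_eq A, ← Subgroup.closure_eq B, ← Subgroup.closure_union] at hg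
    induction hg using Subgroup.closure_induction with
    | mem x hx =>
      rcases hx with hx | hx
      · exact hAab z hzA x hx
      · exact hcommAB z hzA x hx
    | one => simp
    | mul x y _ _ hx hy =>
      calc z * (x * y) = (z * x) * y := by group
      _ = x * (z * y) := by rw [hx]; group
      _ = x * y * z := by rw [hy]; group
    | inv x _ hx =>
      calc z * x⁻¹ = x⁻¹ * (x * z * x⁻¹) := by group
      _ = x⁻¹ * (z * x * x⁻¹) := by rw [← hx]
      _ = x⁻¹ * z := by group
  · by_cases hBab : ∀ x ∈ B, ∀ y ∈ B, x * y = y * x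
    · -- B abelian
      obtain ⟨z, hzB, hz1⟩ := subgroup_exists_ne_one hB0
      refine hnocentral z hz1 ?_
      intro g
      have hg : g ∈ A ⊔ B := by rw [hsup]; exact Subgroup.mem_top g
      rw [← Subgroup.closure_eq A, ← Subgroup.closure_eq B, ← Subgroup.closure_union] at hg
      induction hg using Subgroup.closure_induction with
      | mem x hx =>
        rcases hx with hx | hx
        · exact (hcommAB x hx z hzB).symm
        · exact hBab z hzB x hx
      | one => simp
      | mul x y _ _ hx hy =>
        calc z * (x * y) = (z * x) * y := by group
        _ = x * (z * y) := by rw [hx]; group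
        _ = x * y * z := by rw [hy]; group
      | inv x _ hx =>
        calc z * x⁻¹ = x⁻¹ * (x * z * x⁻¹) := by group
        _ = x⁻¹ * (z * x * x⁻¹) := by rw [← hx]
        _ = x⁻¹ * z := by group
    · -- both A and B nonabelian : produce nontrivial commutators
      push_neg at hAab hBab
      obtain ⟨x, hx, y, hy, hxy⟩ := hAab
      obtain ⟨u, hu, v, hv, huv⟩ := hBab
      obtain ⟨a, hadef⟩ : ∃ a : ThompsonF, a = ⁅x, y⁆ := ⟨_, rfl⟩
      obtain ⟨b, hbdef⟩ : ∃ b : ThompsonF, b = ⁅u, v⁆ := ⟨_, rfl⟩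
      have haA : a ∈ A := by
        rw [hadef, commutatorElement_def]
        exact A.mul_mem (A.mul_mem (A.mul_mem hx hy) (A.inv_mem hx)) (A.inv_mem hy)
      have hbB : b ∈ B := by
        rw [hbdef, commutatorElement_def]
        exact B.mul_mem (B.mul_mem (B.mul_mem hu hv) (B.inv_mem hu)) (B.inv_mem hv)
      have hane : a ≠ 1 := by
        rw [hadef]
        intro hc
        exact hxy (commutatorElement_eq_one_iff_commute.1 hc)
      have hbne : b ≠ 1 := by
        rw [hbdef]
        intro hc
        exact huv (commutatorElement_eq_one_iff_commute.1 hc)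
      -- bounded support for b
      have hνb : ν b = 1 := by rw [hbdef]; exact comm_hom_kill ν u v
      have hμb : μh b = 1 := by rw [hbdef]; exact comm_hom_kill μh u v
      obtain ⟨Mb, _, hsb⟩ := bounded_support hνb hμb
      -- all conjugates commute
      have hcomm : ∀ f g : ThompsonF,
          (f * a * f⁻¹) * (g * b * g⁻¹) = (g * b * g⁻¹) * (f * a * f⁻¹) := by
        intro f g
        exact hcommAB _ (hA.conj_mem a haA f) _ (hB.conj_mem b hbB g)
      exact moving_conj hane hbne hsb hcomm

end Assembly

end TFproof

/-- Thompson's group `F` admits no nontrivial decomposition as an (internal) direct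
product: if `F = A × B` then `A` or `B` is trivial. -/
theorem thompsonF_directly_indecomposable (A B : Subgroup ThompsonF)
    (hA : A.Normal) (hB : B.Normal) (hinf : A ⊓ B = ⊥) (hsup : A ⊔ B = ⊤) :
    A = ⊥ ∨ B = ⊥ :=
  TFproof.main_result A B hA hB hinf hsup
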